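/- Band structure of the transfer operator on homogeneous polynomials: let E ∈ GL(n,ℝ) and k ∈ ℕ, and let L_{E,k} be the linear endomorphism of the complex vector space of homogeneous polynomials of degree k in n variables defined by (L_{E,k} p)(y) := p(E⁻¹ y). Then every eigenvalue z ∈ ℂ of L_{E,k} satisfies ‖E‖^{−k} ≤ |z| ≤ ‖E⁻¹‖^{k}. In particular, if ‖E⁻¹‖ < 1 and k ≥ 1, then every eigenvalue of L_{E,k} has modulus strictly less than 1, while for k = 0 the only eigenvalue is 1. -/

import Mathlib

set_option maxHeartbeats 1000000


open Matrix BigOperators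

private lemma my_geom_le {a b K : ℝ} (ha : 0 ≤ a) (hb : 0 ≤ b)
    (h : ∀ m : ℕ, a ^ m ≤ K * b ^ m) : a ≤ b := by
  by_contra hab
  push_neg at hab
  rcases eq_or_lt_of_le hb with hb0 | hb0
  · have h1 := h 1
    rw [pow_one, pow_one, ← hb0, mul_zero] at h1
    exact absurd h1 (not_le.mpr (lt_of_le_of_lt hb hab))
  · have h2 : 1 < a / b := (one_lt_div hb0).mpr hab
    obtain ⟨m, hm⟩ := pow_unbounded_of_one_lt K h2
    rw [div_pow, lt_div_iff₀ (pow_pos hb0 m)] at hm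
    exact absurd (h m) (not_le.mpr hm)

private lemma my_one_le_ratio {c K r : ℝ} (hc : 0 < c) (hr : 0 ≤ r)
    (h : ∀ m : ℕ, c ≤ K * r ^ m) : 1 ≤ r := by
  by_contra hr1
  push_neg at hr1
  rcases eq_or_lt_of_le hr with h0 | h0
  · have h1 := h 1
    rw [pow_one, ← h0, mul_zero] at h1
    exact absurd h1 (not_le.mpr hc)
  · have h2 : (1 : ℝ) < 1 / r := by rw [lt_div_iff₀ h0]; linarith
    obtain ⟨m, hm⟩ := pow_unbounded_of_one_lt (K / c) h2
    rw [div_pow, one_pow, div_lt_div_iff₀ hc (pow_pos h0 m), one_mul] at hm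
    exact absurd (h m) (not_le.mpr hm)

private lemma mv_aeval_eq_eval {σ : Type*} (g : σ → ℂ) (q : MvPolynomial σ ℂ) :
    MvPolynomial.aeval g q = MvPolynomial.eval g q := by
  rw [MvPolynomial.aeval_def, Algebra.algebraMap_self]
  rfl

private lemma coord_le {n : ℕ} (y : Fin n → ℝ) (i : Fin n) :
    |y i| ≤ ‖(WithLp.equiv 2 (Fin n → ℝ)).symm y‖ := by
  rw [EuclideanSpace.norm_eq]
  rw [← Real.sqrt_sq_eq_abs]
  apply Real.sqrt_le_sqrt
  have : (y i) ^ 2 = ‖((WithLp.equiv 2 (Fin n → ℝ)).symm y) i‖ ^ 2 := by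
    simp [Real.norm_eq_abs, sq_abs]
  rw [this]
  exact Finset.single_le_sum
    (f := fun j => ‖((WithLp.equiv 2 (Fin n → ℝ)).symm y) j‖ ^ 2)
    (fun j _ => sq_nonneg _) (Finset.mem_univ i)

private lemma growth {n k : ℕ} {p : MvPolynomial (Fin n) ℂ} (hhom : p.IsHomogeneous k)
    (y : Fin n → ℝ) :
    ‖MvPolynomial.eval (fun i => ((y i : ℝ) : ℂ)) p‖
      ≤ (∑ d ∈ p.support, ‖MvPolynomial.coeff d p‖) *
        ‖(WithLp.equiv 2 (Fin n → ℝ)).symm y‖ ^ k := by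
  set N := ‖(WithLp.equiv 2 (Fin n → ℝ)).symm y‖ with hN
  have hco : ∀ i, ‖(y i : ℂ)‖ ≤ N := by
    intro i
    rw [Complex.norm_real, Real.norm_eq_abs]
    exact coord_le y i
  rw [MvPolynomial.eval_eq, Finset.sum_mul]
  refine le_trans (norm_sum_le _ _) (Finset.sum_le_sum fun d hd => ?_)
  rw [norm_mul]
  refine mul_le_mul_of_nonneg_left ?_ (norm_nonneg _)
  rw [norm_prod]
  have hdeg : ∑ i ∈ d.support, d i = k := by
    have h1 : Finsupp.weight 1 d = k := hhom (MvPolynomial.mem_support_iff.mp hd)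
    have h2 : Finsupp.degree d = k := by rw [Finsupp.degree_eq_weight_one]; exact h1
    simpa [Finsupp.degree_apply] using h2
  calc ∏ i ∈ d.support, ‖(y i : ℂ) ^ d i‖
      ≤ ∏ i ∈ d.support, N ^ d i := by
        refine Finset.prod_le_prod (fun i _ => norm_nonneg _) fun i _ => ?_
        rw [norm_pow]
        exact pow_le_pow_left₀ (norm_nonneg _) (hco i) _
    _ = N ^ k := by rw [Finset.prod_pow_eq_pow_sum, hdeg]

private lemma exists_real_point {n : ℕ} {p : MvPolynomial (Fin n) ℂ} (hp : p ≠ 0) :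
    ∃ y : Fin n → ℝ, MvPolynomial.eval (fun i => ((y i : ℝ) : ℂ)) p ≠ 0 := by
  have hpoint : ∃ v : Fin n → ℂ, MvPolynomial.eval v p ≠ 0 := by
    by_contra h
    push_neg at h
    exact hp (MvPolynomial.funext fun x => by rw [h x, map_zero])
  obtain ⟨v, hv⟩ := hpoint
  set a : Fin n → ℝ := fun i => (v i).re with ha
  set b : Fin n → ℝ := fun i => (v i).im with hb
  set q : Polynomial ℂ := MvPolynomial.aeval
    (fun i => Polynomial.C ((a i : ℂ)) + Polynomial.C ((b i : ℂ)) * Polynomial.X) p with hqdef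
  have hcomp : ∀ t : ℂ, Polynomial.aeval t q
      = MvPolynomial.eval (fun i => (a i : ℂ) + (b i : ℂ) * t) p := by
    intro t
    rw [hqdef, MvPolynomial.comp_aeval_apply, ← mv_aeval_eq_eval]
    have hfun : (fun i => Polynomial.aeval t (Polynomial.C ((a i : ℂ))
        + Polynomial.C ((b i : ℂ)) * Polynomial.X))
        = fun i => (a i : ℂ) + (b i : ℂ) * t := by
      funext i
      simp
    rw [hfun]
  have hq0 : q ≠ 0 := by
    intro h
    apply hv
    have := hcomp Complex.I
    rw [h, map_zero] at this
    have h2 : (fun i => (a i : ℂ) + (b i : ℂ) * Complex.I) = v := by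
      funext i
      simp [ha, hb, Complex.re_add_im]
    rw [h2] at this
    exact this.symm
  have hroots : {t : ℂ | Polynomial.IsRoot q t}.Finite := Polynomial.finite_setOf_isRoot hq0
  have hnsub : ¬ (Set.range (fun t : ℝ => (t : ℂ)) ⊆ {t | Polynomial.IsRoot q t}) := by
    intro hsub
    exact (Set.infinite_range_of_injective Complex.ofReal_injective) (hroots.subset hsub)
  obtain ⟨x, hxr, hx⟩ := Set.not_subset.mp hnsub
  obtain ⟨t, rfl⟩ := hxr
  refine ⟨fun i => a i + b i * t, ?_⟩
  have h3 : (fun i => ((a i + b i * t : ℝ) : ℂ)) = fun i => (a i : ℂ) + (b i : ℂ) * (t : ℂ) := by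
    funext i; push_cast; ring
  rw [h3, ← hcomp]
  intro h
  apply hx
  simp only [Polynomial.IsRoot.def, ← Polynomial.coe_aeval_eq_eval]
  exact h

/-- band structure of the transfer operator on homogeneous polynomials.
Let `E ∈ GL(n,ℝ)` and let `L_{E,k}` be the endomorphism `p(y) ↦ p(E⁻¹y)` of the space of
complex homogeneous polynomials of degree `k` in `n` variables (realized as the substitution
`X i ↦ Σ_j (E⁻¹)_{ij} X j`).  Every eigenvalue `z` of `L_{E,k}` (i.e. `L_{E,k} p = z • p` for
some nonzero homogeneous `p` of degree `k`) satisfies `‖E‖^{−k} ≤ |z| ≤ ‖E⁻¹‖^k`, the norms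
being operator norms with respect to the Euclidean norm on `ℝⁿ`.  In particular, if
`‖E⁻¹‖ < 1` and `k ≥ 1` then `|z| < 1`, while for `k = 0` the only eigenvalue is `1`. -/
theorem transfer_operator_band_structure (n k : ℕ) (E : Matrix (Fin n) (Fin n) ℝ)
    (hE : IsUnit E.det) (z : ℂ) (p : MvPolynomial (Fin n) ℂ) (hp : p ≠ 0)
    (hhom : p.IsHomogeneous k)
    (heig : MvPolynomial.aeval
        (fun i => ∑ j : Fin n, MvPolynomial.C (((E⁻¹ : Matrix (Fin n) (Fin n) ℝ) i j : ℝ) : ℂ)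
          * (MvPolynomial.X j : MvPolynomial (Fin n) ℂ)) p = z • p) :
    ‖Matrix.toEuclideanCLM (𝕜 := ℝ) E‖ ^ (-(k : ℤ)) ≤ ‖z‖ ∧
    ‖z‖ ≤ ‖Matrix.toEuclideanCLM (𝕜 := ℝ) E⁻¹‖ ^ k ∧
    (‖Matrix.toEuclideanCLM (𝕜 := ℝ) E⁻¹‖ < 1 → 1 ≤ k → ‖z‖ < 1) ∧
    (k = 0 → z = 1) := by
  by_cases hk : k = 0
  · -- degree zero case
    subst hk
    have hpc : p = MvPolynomial.C (MvPolynomial.coeff 0 p) := by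
      ext m
      by_cases hm : m = 0
      · subst hm; simp
      · have h0 : MvPolynomial.coeff m p = 0 := by
          by_contra hc
          have h1 : Finsupp.weight 1 m = 0 := hhom hc
          have h2 : Finsupp.degree m = 0 := by rw [Finsupp.degree_eq_weight_one]; exact h1
          exact hm ((Finsupp.degree_eq_zero_iff m).mp h2)
        simp [h0, MvPolynomial.coeff_C, Ne.symm hm]
    have hc0 : MvPolynomial.coeff 0 p ≠ 0 := by
      intro h
      exact hp (by rw [hpc, h, map_zero])
    have hz : z = 1 := by
      rw [hpc] at heig
      rw [MvPolynomial.aeval_C, MvPolynomial.smul_eq_C_mul, ← MvPolynomial.C_mul] at heig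
      have := congrArg (MvPolynomial.coeff 0) heig
      simp [MvPolynomial.algebraMap_eq, MvPolynomial.coeff_C] at this
      have h2 : (1 - z) * MvPolynomial.coeff 0 p = 0 := by ring_nf; linear_combination this
      rcases mul_eq_zero.mp h2 with h3 | h3
      · linear_combination -h3
      · exact absurd h3 hc0
    subst hz
    refine ⟨?_, ?_, fun _ h => absurd h (by norm_num), fun _ => rfl⟩
    · rw [Nat.cast_zero, neg_zero, zpow_zero, norm_one]
    · rw [pow_zero, norm_one]
  · -- k ≥ 1
    rcases Nat.eq_zero_or_pos n with hn | hn
    · -- n = 0 : impossible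
      exfalso
      obtain ⟨d, hd⟩ := MvPolynomial.support_nonempty.mpr hp
      have h1 : Finsupp.weight 1 d = k := hhom (MvPolynomial.mem_support_iff.mp hd)
      have h2 : Finsupp.degree d = k := by rw [Finsupp.degree_eq_weight_one]; exact h1
      subst hn
      have hd0 : d = 0 := Subsingleton.elim d 0
      rw [hd0, map_zero] at h2
      exact hk h2.symm
    -- main case
    set ev : (Fin n → ℝ) → ℂ := fun y => MvPolynomial.eval (fun i => ((y i : ℝ) : ℂ)) p with hev
    set C := ∑ d ∈ p.support, ‖MvPolynomial.coeff d p‖ with hCdef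
    set NA := ‖Matrix.toEuclideanCLM (𝕜 := ℝ) E⁻¹‖ with hNA
    set NE := ‖Matrix.toEuclideanCLM (𝕜 := ℝ) E‖ with hNE
    have hNA0 : 0 ≤ NA := norm_nonneg _
    have hNE0 : 0 ≤ NE := norm_nonneg _
    have hC0 : 0 ≤ C := Finset.sum_nonneg fun d _ => norm_nonneg _
    -- pointwise eigen identity
    have key : ∀ y : Fin n → ℝ, ev ((E⁻¹).mulVec y) = z * ev y := by
      intro y
      have h1 := congrArg (MvPolynomial.aeval (R := ℂ) (fun i => ((y i : ℝ) : ℂ))) heig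
      rw [MvPolynomial.comp_aeval_apply, _root_.map_smul, smul_eq_mul] at h1
      have h2 : (fun i => (MvPolynomial.aeval fun i => ((y i : ℝ) : ℂ))
          (∑ j : Fin n, MvPolynomial.C (((E⁻¹ : Matrix (Fin n) (Fin n) ℝ) i j : ℝ) : ℂ)
            * MvPolynomial.X j)) = fun i => (((E⁻¹).mulVec y i : ℝ) : ℂ) := by
        funext i
        simp only [map_sum, _root_.map_mul, MvPolynomial.aeval_C, MvPolynomial.aeval_X,
          Matrix.mulVec, dotProduct]
        push_cast
        simp [Algebra.algebraMap_self]
      rw [h2] at h1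
      rw [hev]
      simp only at h1 ⊢
      rw [← mv_aeval_eq_eval, ← mv_aeval_eq_eval]
      exact h1
    -- reversed identity
    have key2 : ∀ w : Fin n → ℝ, ev w = z * ev (E.mulVec w) := by
      intro w
      have := key (E.mulVec w)
      rwa [Matrix.mulVec_mulVec, Matrix.nonsing_inv_mul E hE, Matrix.one_mulVec] at this
    -- operator norm bounds
    have hmulA : ∀ y : Fin n → ℝ, ‖(WithLp.equiv 2 (Fin n → ℝ)).symm ((E⁻¹).mulVec y)‖
        ≤ NA * ‖(WithLp.equiv 2 (Fin n → ℝ)).symm y‖ := by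
      intro y
      have := (Matrix.toEuclideanCLM (𝕜 := ℝ) E⁻¹).le_opNorm
        ((WithLp.equiv 2 (Fin n → ℝ)).symm y)
      rwa [Matrix.toEuclideanCLM_toLp] at this
    have hmulE : ∀ y : Fin n → ℝ, ‖(WithLp.equiv 2 (Fin n → ℝ)).symm (E.mulVec y)‖
        ≤ NE * ‖(WithLp.equiv 2 (Fin n → ℝ)).symm y‖ := by
      intro y
      have := (Matrix.toEuclideanCLM (𝕜 := ℝ) E).le_opNorm
        ((WithLp.equiv 2 (Fin n → ℝ)).symm y)
      rwa [Matrix.toEuclideanCLM_toLp] at this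
    obtain ⟨y₀, hy₀⟩ := exists_real_point hp
    set Ny := ‖(WithLp.equiv 2 (Fin n → ℝ)).symm y₀‖ with hNy
    have hNy0 : 0 ≤ Ny := norm_nonneg _
    have hevy : 0 < ‖ev y₀‖ := by
      rw [norm_pos_iff]
      exact hy₀
    -- iterated identities
    have hup : ∀ m : ℕ, ev (((E⁻¹) ^ m).mulVec y₀) = z ^ m * ev y₀ := by
      intro m
      induction m with
      | zero => simp [Matrix.one_mulVec]
      | succ m ih =>
        rw [pow_succ', ← Matrix.mulVec_mulVec, key, ih, pow_succ']
        ring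
    have hdown : ∀ m : ℕ, ev y₀ = z ^ m * ev ((E ^ m).mulVec y₀) := by
      intro m
      induction m with
      | zero => simp [Matrix.one_mulVec]
      | succ m ih =>
        rw [ih, key2 ((E ^ m).mulVec y₀), Matrix.mulVec_mulVec, ← pow_succ', pow_succ']
        ring
    -- iterated norm bounds
    have hnup : ∀ m : ℕ, ‖(WithLp.equiv 2 (Fin n → ℝ)).symm (((E⁻¹) ^ m).mulVec y₀)‖
        ≤ NA ^ m * Ny := by
      intro m
      induction m with
      | zero => simp [Matrix.one_mulVec, hNy]
      | succ m ih =>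
        rw [pow_succ', ← Matrix.mulVec_mulVec]
        calc ‖(WithLp.equiv 2 (Fin n → ℝ)).symm ((E⁻¹).mulVec (((E⁻¹) ^ m).mulVec y₀))‖
            ≤ NA * ‖(WithLp.equiv 2 (Fin n → ℝ)).symm (((E⁻¹) ^ m).mulVec y₀)‖ := hmulA _
          _ ≤ NA * (NA ^ m * Ny) := by gcongr
          _ = NA ^ (m + 1) * Ny := by ring
    have hndown : ∀ m : ℕ, ‖(WithLp.equiv 2 (Fin n → ℝ)).symm ((E ^ m).mulVec y₀)‖
        ≤ NE ^ m * Ny := by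
      intro m
      induction m with
      | zero => simp [Matrix.one_mulVec, hNy]
      | succ m ih =>
        rw [pow_succ', ← Matrix.mulVec_mulVec]
        calc ‖(WithLp.equiv 2 (Fin n → ℝ)).symm (E.mulVec ((E ^ m).mulVec y₀))‖
            ≤ NE * ‖(WithLp.equiv 2 (Fin n → ℝ)).symm ((E ^ m).mulVec y₀)‖ := hmulE _
          _ ≤ NE * (NE ^ m * Ny) := by gcongr
          _ = NE ^ (m + 1) * Ny := by ring
    -- upper bound
    have hzu : ‖z‖ ≤ NA ^ k := by
      refine my_geom_le (norm_nonneg _) (pow_nonneg hNA0 k) (K := C * Ny ^ k / ‖ev y₀‖) ?_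
      intro m
      rw [div_mul_eq_mul_div, le_div_iff₀ hevy]
      calc ‖z‖ ^ m * ‖ev y₀‖
          = ‖ev (((E⁻¹) ^ m).mulVec y₀)‖ := by
            rw [hup m, norm_mul, norm_pow]
        _ ≤ C * ‖(WithLp.equiv 2 (Fin n → ℝ)).symm (((E⁻¹) ^ m).mulVec y₀)‖ ^ k :=
            growth hhom _
        _ ≤ C * (NA ^ m * Ny) ^ k :=
            mul_le_mul_of_nonneg_left (pow_le_pow_left₀ (norm_nonneg _) (hnup m) k) hC0
        _ = C * Ny ^ k * (NA ^ k) ^ m := by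
            rw [mul_pow, ← pow_mul, mul_comm m k, pow_mul]
            ring
    -- lower bound
    have hzl : 1 ≤ ‖z‖ * NE ^ k := by
      refine my_one_le_ratio hevy (mul_nonneg (norm_nonneg _) (pow_nonneg hNE0 k))
        (K := C * Ny ^ k) ?_
      intro m
      calc ‖ev y₀‖
          = ‖z‖ ^ m * ‖ev ((E ^ m).mulVec y₀)‖ := by
            rw [hdown m, norm_mul, norm_pow]
        _ ≤ ‖z‖ ^ m * (C * ‖(WithLp.equiv 2 (Fin n → ℝ)).symm ((E ^ m).mulVec y₀)‖ ^ k) :=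
            mul_le_mul_of_nonneg_left (growth hhom _) (pow_nonneg (norm_nonneg _) m)
        _ ≤ ‖z‖ ^ m * (C * (NE ^ m * Ny) ^ k) :=
            mul_le_mul_of_nonneg_left
              (mul_le_mul_of_nonneg_left (pow_le_pow_left₀ (norm_nonneg _) (hndown m) k) hC0)
              (pow_nonneg (norm_nonneg _) m)
        _ = C * Ny ^ k * (‖z‖ * NE ^ k) ^ m := by
            rw [mul_pow, mul_pow, ← pow_mul, mul_comm m k, pow_mul]
            ring
    have hNEk : 0 < NE ^ k := by
      by_contra h
      push_neg at h
      have h2 : NE ^ k = 0 := le_antisymm h (pow_nonneg hNE0 k)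
      rw [h2, mul_zero] at hzl
      linarith
    refine ⟨?_, hzu, ?_, fun h => absurd h hk⟩
    · rw [_root_.zpow_neg, zpow_natCast, inv_eq_one_div, div_le_iff₀ hNEk]
      linarith [hzl]
    · intro h1 _
      exact lt_of_le_of_lt hzu (pow_lt_one₀ hNA0 h1 hk)
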